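/- In the topos of trees, every endomap F on a hom-object of the form ▶A → A has a unique fixed point: there is a fixed-point combinator Θ : (▶A → A) → A such that Θ f = f (next (Θ f)), and any u with f (next u) = u equals Θ f. -/
import Mathlib


/-- An object of the topos of trees `S`. -/
structure Obj where
  X : ℕ → Type
  r : ∀ i, X (i + 1) → X i

def IsHom (A B : Obj) (f : ∀ i, A.X i → B.X i) : Prop :=
  ∀ i a, B.r i (f (i + 1) a) = f i (A.r i a)

/-- Global elements `1 → A` of an object `A`. -/
def GS (A : Obj) : Type :=
  { x : ∀ i, A.X i // ∀ i, A.r i (x (i + 1)) = x i }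

/-- Carrier of `▶A`: `(▶A)₁ = {*}` and `(▶A)ᵢ₊₁ = Aᵢ`. -/
def LaterX (A : Obj) : ℕ → Type
  | 0 => PUnit
  | j + 1 => A.X j

def LaterR (A : Obj) : ∀ i, LaterX A (i + 1) → LaterX A i
  | 0 => fun _ => ⟨⟩
  | j + 1 => A.r j

/-- The later functor `▶` on objects. -/
def Later (A : Obj) : Obj := ⟨LaterX A, LaterR A⟩

/-- The natural transformation `next : X → ▶X`. -/
def nextMap (A : Obj) : ∀ i, A.X i → LaterX A i
  | 0 => fun _ => ⟨⟩
  | j + 1 => A.r j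

/-- Iterated application building the fixed point. -/
def fixSeq (A : Obj) (f : ∀ i, LaterX A i → A.X i) : ∀ i, A.X i
  | 0 => f 0 ⟨⟩
  | i + 1 => f (i + 1) (fixSeq A f i)

lemma fixSeq_compat (A : Obj) (f : ∀ i, LaterX A i → A.X i)
    (hf : IsHom (Later A) A f) : ∀ i, A.r i (fixSeq A f (i + 1)) = fixSeq A f i := by
  intro i
  induction i with
  | zero => exact hf 0 (fixSeq A f 0)
  | succ j ih =>
      have h := hf (j + 1) (fixSeq A f (j + 1))
      show A.r (j + 1) (f (j + 2) (fixSeq A f (j + 1))) = f (j + 1) (fixSeq A f j)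
      rw [h]
      show f (j + 1) (A.r j (fixSeq A f (j + 1))) = _
      rw [ih]

/-- Banach's fixed point theorem in the topos of trees: every morphism
`f : ▶A → A` has a unique fixed point; in particular there is a fixed-point
combinator `Θ` with `Θ f = f (next (Θ f))`, and any `u` with `f (next u) = u`
equals `Θ f`. -/
theorem fixed_point_combinator (A : Obj) :
    ∃ Θ : { f : ∀ i, LaterX A i → A.X i // IsHom (Later A) A f } → GS A,
      ∀ f, (∀ i, f.1 i (nextMap A i ((Θ f).1 i)) = (Θ f).1 i) ∧
        ∀ u : GS A, (∀ i, f.1 i (nextMap A i (u.1 i)) = u.1 i) → u = Θ f := by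
  refine ⟨fun f => ⟨fixSeq A f.1, fixSeq_compat A f.1 f.2⟩, fun f => ⟨?_, ?_⟩⟩
  · intro i
    cases i with
    | zero => rfl
    | succ j =>
        show f.1 (j + 1) (A.r j (fixSeq A f.1 (j + 1))) = _
        rw [fixSeq_compat A f.1 f.2 j]
        rfl
  · intro u hu
    apply Subtype.ext
    funext i
    induction i with
    | zero => exact (hu 0).symm.trans rfl
    | succ j ih =>
        have h1 : nextMap A (j + 1) (u.1 (j + 1)) = u.1 j := u.2 j
        calc u.1 (j + 1) = f.1 (j + 1) (nextMap A (j + 1) (u.1 (j + 1))) := (hu (j+1)).symm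
          _ = f.1 (j + 1) (u.1 j) := by rw [h1]
          _ = fixSeq A f.1 (j + 1) := by rw [ih]; rfl
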